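/- arXiv:1609.04578 — 7 statements merged into one kernel-verified Lean document; each statement's English description precedes it below -/
import Mathlib

section
/- Let A ⊆ M and B ⊆ N be subsets of modules, f : A → B a function, and f* : A^h → B^h the componentwise map. Let Υ(t₁,...,t_h) = Σⱼ Υⱼ(tⱼ) and Φ(t₁,...,t_h) = Σⱼ Φⱼ(tⱼ) be sums of single-variable functions. If f* is an (Υ,Φ)-isomorphism, then for every subset J ⊆ {1,...,h}, f* is also an (Υ_J, Φ_J)-isomorphism, where Υ_J and Φ_J are obtained by negating the terms indexed by J; consequently |Υ_J(A^h)| = |Φ_J(B^h)|. -/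
open Finset in
private lemma sign_swap {h : ℕ} {X : Type*} [AddCommGroup X] (J : Finset (Fin h))
    (u v : Fin h → X) :
    ((∑ j, if j ∈ J then -u j else u j) = ∑ j, if j ∈ J then -v j else v j) ↔
      ((∑ j, if j ∈ J then v j else u j) = ∑ j, if j ∈ J then u j else v j) := by
  rw [← sub_eq_zero, ← Finset.sum_sub_distrib]
  conv_rhs => rw [← sub_eq_zero, ← Finset.sum_sub_distrib]
  have hterm : ∀ j : Fin h,
      ((if j ∈ J then -u j else u j) - (if j ∈ J then -v j else v j)) =
        ((if j ∈ J then v j else u j) - (if j ∈ J then u j else v j)) := by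
    intro j; split_ifs <;> abel
  rw [Finset.sum_congr rfl fun j _ => hterm j]

private lemma image_ncard_eq {α β γ : Type*} (s : Set α) (F : α → β) (G : α → γ)
    (hFG : ∀ a ∈ s, ∀ a' ∈ s, F a = F a' ↔ G a = G a') :
    (F '' s).ncard = (G '' s).ncard := by
  classical
  rcases s.eq_empty_or_nonempty with rfl | ⟨a₀, ha₀⟩
  · simp
  · set φ : β → γ := fun x => if hx : ∃ a ∈ s, F a = x then G hx.choose else G a₀ with hφ
    have key : ∀ a ∈ s, φ (F a) = G a := by
      intro a ha
      have hx : ∃ a' ∈ s, F a' = F a := ⟨a, ha, rfl⟩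
      have h1 := hx.choose_spec
      simp only [hφ, dif_pos hx]
      exact ((hFG _ h1.1 a ha).mp h1.2)
    have himg : φ '' (F '' s) = G '' s := by
      ext y
      constructor
      · rintro ⟨x, ⟨a, ha, rfl⟩, rfl⟩
        exact ⟨a, ha, (key a ha).symm⟩
      · rintro ⟨a, ha, rfl⟩
        exact ⟨F a, ⟨a, ha, rfl⟩, key a ha⟩
    have hinj : Set.InjOn φ (F '' s) := by
      rintro x ⟨a, ha, rfl⟩ x' ⟨a', ha', rfl⟩ hxx
      rw [key a ha, key a' ha'] at hxx
      exact (hFG a ha a' ha').mpr hxx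
    rw [← himg, Set.ncard_image_of_injOn hinj]

open Finset in
/-- Theorem 2: if the componentwise map `f*` is an `(Υ,Φ)`-isomorphism for the
forms `Υ = Σⱼ Υⱼ` and `Φ = Σⱼ Φⱼ`, then for every `J ⊆ {1,…,h}` it is also an
`(Υ_J,Φ_J)`-isomorphism, and `|Υ_J(Aʰ)| = |Φ_J(Bʰ)|`. -/
theorem stmt_7 {R S : Type*} [Ring R] [Ring S]
    {M N : Type*} [AddCommGroup M] [Module R M] [AddCommGroup N] [Module S N]
    {X Y : Type*} [AddCommGroup X] [AddCommGroup Y]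
    (A : Set M) (B : Set N) (h : ℕ)
    (Υ : Fin h → M → X) (Φ : Fin h → N → Y)
    (f : M → N) (hbij : Set.BijOn f A B)
    (hiso : ∀ a a' : Fin h → M, (∀ j, a j ∈ A) → (∀ j, a' j ∈ A) →
      ((∑ j, Υ j (a j) = ∑ j, Υ j (a' j)) ↔
        (∑ j, Φ j (f (a j)) = ∑ j, Φ j (f (a' j))))) :
    ∀ J : Finset (Fin h),
      (∀ a a' : Fin h → M, (∀ j, a j ∈ A) → (∀ j, a' j ∈ A) →
        ((∑ j, (if j ∈ J then -Υ j (a j) else Υ j (a j))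
            = ∑ j, (if j ∈ J then -Υ j (a' j) else Υ j (a' j))) ↔
          (∑ j, (if j ∈ J then -Φ j (f (a j)) else Φ j (f (a j)))
            = ∑ j, (if j ∈ J then -Φ j (f (a' j)) else Φ j (f (a' j)))))) ∧
      ((fun a : Fin h → M => ∑ j, (if j ∈ J then -Υ j (a j) else Υ j (a j))) ''
          {a | ∀ j, a j ∈ A}).ncard =
        ((fun b : Fin h → N => ∑ j, (if j ∈ J then -Φ j (b j) else Φ j (b j))) ''
          {b | ∀ j, b j ∈ B}).ncard := by
  intro J
  have main : ∀ a a' : Fin h → M, (∀ j, a j ∈ A) → (∀ j, a' j ∈ A) →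
      ((∑ j, (if j ∈ J then -Υ j (a j) else Υ j (a j))
          = ∑ j, (if j ∈ J then -Υ j (a' j) else Υ j (a' j))) ↔
        (∑ j, (if j ∈ J then -Φ j (f (a j)) else Φ j (f (a j)))
          = ∑ j, (if j ∈ J then -Φ j (f (a' j)) else Φ j (f (a' j))))) := by
    intro a a' ha ha'
    set c : Fin h → M := fun j => if j ∈ J then a' j else a j with hc
    set c' : Fin h → M := fun j => if j ∈ J then a j else a' j with hc'
    have hcA : ∀ j, c j ∈ A := by intro j; simp only [hc]; split_ifs; exacts [ha' j, ha j]
    have hc'A : ∀ j, c' j ∈ A := by intro j; simp only [hc']; split_ifs; exacts [ha j, ha' j]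
    have hUc : ∀ j, Υ j (c j) = if j ∈ J then Υ j (a' j) else Υ j (a j) := by
      intro j; simp only [hc]; split_ifs <;> rfl
    have hUc' : ∀ j, Υ j (c' j) = if j ∈ J then Υ j (a j) else Υ j (a' j) := by
      intro j; simp only [hc']; split_ifs <;> rfl
    have hFc : ∀ j, Φ j (f (c j)) = if j ∈ J then Φ j (f (a' j)) else Φ j (f (a j)) := by
      intro j; simp only [hc]; split_ifs <;> rfl
    have hFc' : ∀ j, Φ j (f (c' j)) = if j ∈ J then Φ j (f (a j)) else Φ j (f (a' j)) := by
      intro j; simp only [hc']; split_ifs <;> rfl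
    calc (∑ j, (if j ∈ J then -Υ j (a j) else Υ j (a j))
            = ∑ j, (if j ∈ J then -Υ j (a' j) else Υ j (a' j)))
        ↔ (∑ j, Υ j (c j) = ∑ j, Υ j (c' j)) := by
          rw [sign_swap J (fun j => Υ j (a j)) (fun j => Υ j (a' j))]
          rw [Finset.sum_congr rfl fun j _ => (hUc j).symm,
            Finset.sum_congr rfl fun j _ => (hUc' j).symm]
      _ ↔ (∑ j, Φ j (f (c j)) = ∑ j, Φ j (f (c' j))) := hiso c c' hcA hc'A
      _ ↔ _ := by
          rw [Finset.sum_congr rfl fun j _ => hFc j,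
            Finset.sum_congr rfl fun j _ => hFc' j,
            ← sign_swap J (fun j => Φ j (f (a j))) (fun j => Φ j (f (a' j)))]
  refine ⟨main, ?_⟩
  have himgB : ((fun b : Fin h → N => ∑ j, (if j ∈ J then -Φ j (b j) else Φ j (b j))) ''
        {b | ∀ j, b j ∈ B}) =
      ((fun a : Fin h → M => ∑ j, (if j ∈ J then -Φ j (f (a j)) else Φ j (f (a j)))) ''
        {a | ∀ j, a j ∈ A}) := by
    ext y
    constructor
    · rintro ⟨b, hb, rfl⟩
      choose a haA hfa using fun j => hbij.surjOn (hb j)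
      refine ⟨a, haA, ?_⟩
      simp only [hfa]
    · rintro ⟨a, ha, rfl⟩
      exact ⟨fun j => f (a j), fun j => hbij.mapsTo (ha j), rfl⟩
  rw [himgB]
  exact image_ncard_eq _ _ _ fun a ha a' ha' => main a a' ha ha'
end

section
/- Let Φ(t₁,...,t_h) = Σⱼ φⱼtⱼ be a nonzero linear form with integer coefficients, A a nonempty finite subset of ℤ^d, a* = max over a ∈ A and coordinates i of |πᵢ(a)|, φ* = maxⱼ |φⱼ|. If λ > 2a*φ*h + 1, then the map f_λ(x₁,...,x_d) = Σᵢ xᵢλ^{i-1} restricted to A is a Φ-isomorphism from A to a set of real numbers: for all h-tuples (a₁,...,a_h), (a_{h+1},...,a_{2h}) in A^h, Φ(a₁,...,a_h) = Φ(a_{h+1},...,a_{2h}) if and only if Φ(f_λ(a₁),...,f_λ(a_h)) = Φ(f_λ(a_{h+1}),...,f_λ(a_{2h})). -/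
open Finset

lemma digit_aux (M lam : ℝ) (hM0 : 0 ≤ M) (hlam : lam > M + 1) :
    ∀ (d : ℕ) (c : Fin d → ℤ), (∀ i, |(c i : ℝ)| ≤ M) →
      (∑ i, (c i : ℝ) * lam ^ (i : ℕ)) = 0 → ∀ i, c i = 0 := by
  intro d
  induction d with
  | zero => intro c _ _ i; exact i.elim0
  | succ n ih =>
    intro c hc hsum
    have hlam1 : (1:ℝ) < lam := by linarith
    have hlam0 : (0:ℝ) < lam := by linarith
    have hsplit : (∑ i : Fin n, (c i.castSucc : ℝ) * lam ^ (i:ℕ))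
        + (c (Fin.last n) : ℝ) * lam ^ n = 0 := by
      rw [Fin.sum_univ_castSucc (f := fun i : Fin (n+1) => (c i : ℝ) * lam ^ (i:ℕ))] at hsum
      simpa using hsum
    have hlast : c (Fin.last n) = 0 := by
      by_contra hne
      have h1 : (1:ℝ) ≤ |(c (Fin.last n) : ℝ)| := by
        exact_mod_cast Int.one_le_abs (by exact_mod_cast hne)
      have hpow : (0:ℝ) < lam ^ n := pow_pos hlam0 n
      have hbound : |(∑ i : Fin n, (c i.castSucc : ℝ) * lam ^ (i:ℕ))|
          ≤ M * ((lam ^ n - 1) / (lam - 1)) := by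
        calc |(∑ i : Fin n, (c i.castSucc : ℝ) * lam ^ (i:ℕ))|
            ≤ ∑ i : Fin n, |(c i.castSucc : ℝ) * lam ^ (i:ℕ)| := Finset.abs_sum_le_sum_abs _ _
          _ ≤ ∑ i : Fin n, M * lam ^ (i:ℕ) := by
              apply Finset.sum_le_sum
              intro i _
              rw [abs_mul, abs_of_pos (pow_pos hlam0 _)]
              exact mul_le_mul_of_nonneg_right (hc _) (le_of_lt (pow_pos hlam0 _))
          _ = M * ∑ i : Fin n, lam ^ (i:ℕ) := by rw [Finset.mul_sum]
          _ = M * ((lam ^ n - 1) / (lam - 1)) := by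
              rw [Fin.sum_univ_eq_sum_range, geom_sum_eq (ne_of_gt hlam1)]
      have heq : |(c (Fin.last n) : ℝ) * lam ^ n|
          = |(∑ i : Fin n, (c i.castSucc : ℝ) * lam ^ (i:ℕ))| := by
        rw [show (c (Fin.last n) : ℝ) * lam ^ n
            = -(∑ i : Fin n, (c i.castSucc : ℝ) * lam ^ (i:ℕ)) by linarith, abs_neg]
      have hge : lam ^ n ≤ |(c (Fin.last n) : ℝ) * lam ^ n| := by
        rw [abs_mul, abs_of_pos hpow]
        nlinarith
      have hlt : M * ((lam ^ n - 1) / (lam - 1)) < lam ^ n := by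
        rw [mul_div_assoc'] at *
        rw [div_lt_iff₀ (by linarith : (0:ℝ) < lam - 1)]
        nlinarith [one_le_pow₀ (le_of_lt hlam1) (n := n)]
      linarith [heq ▸ hge, hbound]
    have hsum' : (∑ i : Fin n, (c i.castSucc : ℝ) * lam ^ (i:ℕ)) = 0 := by
      rw [hlast] at hsplit; simpa using hsplit
    intro i
    refine Fin.lastCases hlast (fun j => ?_) i
    exact ih (fun i => c i.castSucc) (fun i => hc _) hsum' j

open Finset in
/-- Theorem 3 (key computation): for `λ > 2a*φ*h + 1`, the map
`f_λ(x) = Σᵢ xᵢ λ^(i-1)` is a `Φ`-isomorphism on a finite set `A ⊆ ℤ^d`. -/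
theorem stmt_8 (h d : ℕ) (φ : Fin h → ℤ) (hφ : φ ≠ 0)
    (A : Finset (Fin d → ℤ)) (hA : A.Nonempty)
    (astar φstar : ℤ)
    (hastar : ∀ x ∈ A, ∀ i, |x i| ≤ astar)
    (hφstar : ∀ j, |φ j| ≤ φstar)
    (lam : ℝ) (hlam : lam > 2 * (astar : ℝ) * (φstar : ℝ) * h + 1) :
    ∀ a b : Fin h → (Fin d → ℤ), (∀ j, a j ∈ A) → (∀ j, b j ∈ A) →
      ((∑ j, φ j • a j = ∑ j, φ j • b j) ↔
        (∑ j, (φ j : ℝ) * (∑ i, (a j i : ℝ) * lam ^ (i : ℕ))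
          = ∑ j, (φ j : ℝ) * (∑ i, (b j i : ℝ) * lam ^ (i : ℕ)))) := by
  intro a b ha hb
  -- rearrangement
  have key : ∀ v : Fin h → Fin d → ℤ,
      ∑ j, (φ j : ℝ) * (∑ i, (v j i : ℝ) * lam ^ (i : ℕ))
        = ∑ i : Fin d, ((∑ j, φ j * v j i : ℤ) : ℝ) * lam ^ (i : ℕ) := by
    intro v
    push_cast
    simp_rw [Finset.mul_sum, Finset.sum_mul]
    rw [Finset.sum_comm]
    ring_nf
    exact Finset.sum_congr rfl fun i _ => Finset.sum_congr rfl fun j _ => by ring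
  have coord : (∑ j, φ j • a j = ∑ j, φ j • b j) ↔
      ∀ i, (∑ j, φ j * a j i) = ∑ j, φ j * b j i := by
    constructor
    · intro hEq i
      have := congrFun hEq i
      simpa [Finset.sum_apply] using this
    · intro hi
      funext i
      simpa [Finset.sum_apply] using hi i
  rw [coord, key a, key b]
  constructor
  · intro hi
    exact Finset.sum_congr rfl fun i _ => by rw [hi i]
  · intro hreal
    -- h > 0 else φ = 0
    rcases Nat.eq_zero_or_pos h with hh | hh
    · subst hh; exact absurd (funext fun j => j.elim0) hφ
    rcases Nat.eq_zero_or_pos d with hd | hd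
    · subst hd; intro i; exact i.elim0
    obtain ⟨x, hx⟩ := hA
    have hastar0 : (0:ℤ) ≤ astar := le_trans (abs_nonneg _) (hastar x hx ⟨0, hd⟩)
    have hφstar0 : (0:ℤ) ≤ φstar := le_trans (abs_nonneg _) (hφstar ⟨0, hh⟩)
    set c : Fin d → ℤ := fun i => (∑ j, φ j * a j i) - ∑ j, φ j * b j i with hc
    have hcb : ∀ i, |(c i : ℝ)| ≤ 2 * (astar:ℝ) * φstar * h := by
      intro i
      have : |c i| ≤ (h : ℤ) * (φstar * (2 * astar)) := by
        rw [hc]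
        simp only [← Finset.sum_sub_distrib]
        calc |∑ j, (φ j * a j i - φ j * b j i)|
            ≤ ∑ j, |φ j * a j i - φ j * b j i| := Finset.abs_sum_le_sum_abs _ _
          _ ≤ ∑ _j : Fin h, φstar * (2 * astar) := by
              apply Finset.sum_le_sum
              intro j _
              rw [← mul_sub, abs_mul]
              refine mul_le_mul (hφstar j) ?_ (abs_nonneg _) hφstar0
              calc |a j i - b j i| ≤ |a j i| + |b j i| := abs_sub _ _
                _ ≤ astar + astar := add_le_add (hastar _ (ha j) i) (hastar _ (hb j) i)
                _ = 2 * astar := by ring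
          _ = (h : ℤ) * (φstar * (2 * astar)) := by simp [mul_comm]
      calc |(c i : ℝ)| = ((|c i| : ℤ) : ℝ) := by push_cast; rfl
        _ ≤ (((h : ℤ) * (φstar * (2 * astar)) : ℤ) : ℝ) := by exact_mod_cast this
        _ = 2 * (astar:ℝ) * φstar * h := by push_cast; ring
    have hzero : (∑ i, (c i : ℝ) * lam ^ (i : ℕ)) = 0 := by
      simp only [hc]
      push_cast
      simp only [sub_mul, Finset.sum_sub_distrib]
      rw [sub_eq_zero]
      convert hreal using 2 <;> push_cast <;> ring
    have := digit_aux (2 * (astar:ℝ) * φstar * h) lam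
      (by positivity) hlam d c hcb hzero
    intro i
    exact sub_eq_zero.mp (this i)
end

section
/- Let Φ be a nonzero linear form with rational coefficients. Every nonempty finite subset of ℤ^d is Φ-isomorphic to a finite set of positive integers. -/
open Finset Polynomial

lemma avoid_lemma (d : ℕ) (V : Finset (Fin d → ℚ)) (hV : ∀ v ∈ V, v ≠ 0) :
    ∃ c : Fin d → ℚ, ∀ v ∈ V, ∑ i, c i * v i ≠ 0 := by
  classical
  set P : ℚ[X] := ∏ v ∈ V, ∑ i : Fin d, C (v i) * X ^ (i : ℕ) with hP
  have hfac : ∀ v ∈ V, (∑ i : Fin d, C (v i) * X ^ (i : ℕ)) ≠ 0 := by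
    intro v hv hv0
    apply hV v hv
    funext i
    have h2 := congrArg (fun p => Polynomial.coeff p (i : ℕ)) hv0
    simp only [finset_sum_coeff, coeff_C_mul, coeff_X_pow, coeff_zero] at h2
    rw [Finset.sum_eq_single i (fun j _ hj => by
        simp [Fin.val_eq_val, Ne.symm hj]) (by simp)] at h2
    simpa using h2
  have hP0 : P ≠ 0 := Finset.prod_ne_zero_iff.mpr hfac
  obtain ⟨x, hx⟩ : ∃ x : ℚ, ¬ P.IsRoot x := by
    have := (Polynomial.finite_setOf_isRoot hP0).infinite_compl
    obtain ⟨x, hx⟩ := this.nonempty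
    exact ⟨x, hx⟩
  refine ⟨fun i => x ^ (i : ℕ), fun v hv hsum => ?_⟩
  apply hx
  show P.eval x = 0
  rw [hP, Polynomial.eval_prod]
  apply Finset.prod_eq_zero hv
  rw [eval_finset_sum]
  simp only [eval_mul, eval_C, eval_pow, eval_X]
  rw [← hsum]
  exact Finset.sum_congr rfl fun i _ => mul_comm _ _

lemma scale_lemma (d : ℕ) (c : Fin d → ℚ) :
    ∃ (cZ : Fin d → ℤ) (M : ℕ), 0 < M ∧ ∀ i, (cZ i : ℚ) = (M : ℚ) * c i := by
  classical
  set M : ℕ := ∏ i, (c i).den with hM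
  have hMpos : 0 < M := Finset.prod_pos fun i _ => (c i).pos
  have key : ∀ i, ∃ z : ℤ, (z : ℚ) = (M : ℚ) * c i := by
    intro i
    obtain ⟨k, hk⟩ := Finset.dvd_prod_of_mem (fun i => (c i).den) (Finset.mem_univ i)
    refine ⟨(k : ℤ) * (c i).num, ?_⟩
    have hden : ((c i).den : ℚ) ≠ 0 := by exact_mod_cast (c i).den_nz
    have hnum : ((c i).num : ℚ) = c i * (c i).den := by
      have h0 := Rat.num_div_den (c i)
      rwa [div_eq_iff hden] at h0
    rw [← hM] at hk
    push_cast [hk, hnum]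
    ring
  choose cZ hcZ using key
  exact ⟨cZ, M, hMpos, hcZ⟩

open Finset in
/-- Theorem 3: every nonempty finite subset of `ℤ^d` is `Φ`-isomorphic to a
set of positive integers, for any nonzero linear form `Φ` with rational
coefficients. -/
theorem stmt_9 (h d : ℕ) (φ : Fin h → ℚ) (hφ : φ ≠ 0)
    (A : Finset (Fin d → ℤ)) (hA : A.Nonempty) :
    ∃ (B : Finset ℤ) (f : (Fin d → ℤ) → ℤ),
      (∀ b ∈ B, 0 < b) ∧ Set.BijOn f A B ∧
      ∀ a b : Fin h → (Fin d → ℤ), (∀ j, a j ∈ A) → (∀ j, b j ∈ A) →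
        ((∑ j, φ j • (fun i => ((a j i : ℚ)))
            = ∑ j, φ j • (fun i => ((b j i : ℚ)))) ↔
          (∑ j, φ j * (f (a j) : ℚ) = ∑ j, φ j * (f (b j) : ℚ))) := by
  classical
  set S : (Fin h → (Fin d → ℤ)) → (Fin d → ℚ) :=
    fun a i => ∑ j, φ j * (a j i : ℚ) with hS
  set T : Finset (Fin h → (Fin d → ℤ)) := Fintype.piFinset (fun _ => A) with hT
  set V1 : Finset (Fin d → ℚ) :=
    ((A ×ˢ A).image fun p => (fun i => ((p.1 i : ℚ) - (p.2 i : ℚ)))).erase 0 with hV1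
  set V2 : Finset (Fin d → ℚ) :=
    ((T ×ˢ T).image fun p => S p.1 - S p.2).erase 0 with hV2
  have hV : ∀ v ∈ V1 ∪ V2, v ≠ 0 := by
    intro v hv
    rcases Finset.mem_union.mp hv with hv | hv
    · exact Finset.ne_of_mem_erase hv
    · exact Finset.ne_of_mem_erase hv
  obtain ⟨c, hc⟩ := avoid_lemma d (V1 ∪ V2) hV
  obtain ⟨cZ, M, hMpos, hcZ⟩ := scale_lemma d c
  have hcv : ∀ v ∈ V1 ∪ V2, ∑ i, (cZ i : ℚ) * v i ≠ 0 := by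
    intro v hv
    have : ∑ i, (cZ i : ℚ) * v i = (M : ℚ) * ∑ i, c i * v i := by
      rw [Finset.mul_sum]
      exact Finset.sum_congr rfl fun i _ => by rw [hcZ i]; ring
    rw [this]
    exact mul_ne_zero (by exact_mod_cast hMpos.ne') (hc v hv)
  set g : (Fin d → ℤ) → ℤ := fun x => ∑ i, cZ i * x i with hg
  -- injectivity on A
  have K1 : ∀ x ∈ A, ∀ y ∈ A, g x = g y → x = y := by
    intro x hx y hy hgxy
    by_contra hxy
    have hmem : (fun i => ((x i : ℚ) - (y i : ℚ))) ∈ V1 ∪ V2 := by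
      refine Finset.mem_union_left _ (Finset.mem_erase.mpr ⟨?_, ?_⟩)
      · intro h0
        apply hxy
        funext i
        have := congrFun h0 i
        simp only [Pi.zero_apply, sub_eq_zero] at this
        exact_mod_cast this
      · exact Finset.mem_image.mpr ⟨(x, y), Finset.mem_product.mpr ⟨hx, hy⟩, rfl⟩
    apply hcv _ hmem
    have : ((g x : ℤ) : ℚ) = ((g y : ℤ) : ℚ) := by rw [hgxy]
    push_cast [hg] at this
    simp only [mul_sub]
    rw [Finset.sum_sub_distrib, this, sub_self]
  obtain ⟨N, hN⟩ := Finset.exists_le (A.image fun x => -g x)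
  set f : (Fin d → ℤ) → ℤ := fun x => g x + (N + 1) with hf
  have hfpos : ∀ x ∈ A, 0 < f x := by
    intro x hx
    have := hN (-g x) (Finset.mem_image_of_mem _ hx)
    simp only [hf]
    linarith
  refine ⟨A.image f, f, ?_, ?_, ?_⟩
  · intro b hb
    obtain ⟨x, hx, rfl⟩ := Finset.mem_image.mp hb
    exact hfpos x hx
  · have hinj : Set.InjOn f ↑A := by
      intro x hx y hy hxy
      exact K1 x hx y hy (by simpa [hf] using hxy)
    rw [Finset.coe_image]
    exact hinj.bijOn_image
  · intro a b ha hb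
    have haT : a ∈ T := by rw [hT, Fintype.mem_piFinset]; exact ha
    have hbT : b ∈ T := by rw [hT, Fintype.mem_piFinset]; exact hb
    have hLa : ∀ t : Fin h → (Fin d → ℤ),
        (∑ j, φ j • (fun i => ((t j i : ℚ)))) = S t := by
      intro t
      funext i
      simp [hS, Finset.sum_apply]
    have hR : ∀ t : Fin h → (Fin d → ℤ),
        ∑ j, φ j * (f (t j) : ℚ)
          = (∑ i, (cZ i : ℚ) * S t i) + (∑ j, φ j) * ((N : ℚ) + 1) := by
      intro t
      have h1 : ∀ j, ((f (t j) : ℤ) : ℚ)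
          = (∑ i, (cZ i : ℚ) * (t j i : ℚ)) + ((N : ℚ) + 1) := by
        intro j
        simp only [hf, hg]
        push_cast
        ring
      calc ∑ j, φ j * (f (t j) : ℚ)
          = ∑ j, (φ j * ∑ i, (cZ i : ℚ) * (t j i : ℚ) + φ j * ((N : ℚ) + 1)) := by
            refine Finset.sum_congr rfl fun j _ => ?_
            rw [h1 j]; ring
        _ = (∑ j, φ j * ∑ i, (cZ i : ℚ) * (t j i : ℚ)) + (∑ j, φ j) * ((N : ℚ) + 1) := by
            rw [Finset.sum_add_distrib, ← Finset.sum_mul]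
        _ = (∑ i, (cZ i : ℚ) * S t i) + (∑ j, φ j) * ((N : ℚ) + 1) := by
            congr 1
            simp_rw [Finset.mul_sum]
            rw [Finset.sum_comm]
            refine Finset.sum_congr rfl fun i _ => ?_
            rw [hS, Finset.mul_sum]
            exact Finset.sum_congr rfl fun j _ => by ring
    rw [hLa a, hLa b, hR a, hR b]
    constructor
    · intro hab
      rw [hab]
    · intro hr
      by_contra hne
      have hmem : S a - S b ∈ V1 ∪ V2 := by
        refine Finset.mem_union_right _ (Finset.mem_erase.mpr ⟨sub_ne_zero.mpr hne, ?_⟩)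
        exact Finset.mem_image.mpr ⟨(a, b), Finset.mem_product.mpr ⟨haT, hbT⟩, rfl⟩
      apply hcv _ hmem
      have hsum : (∑ i, (cZ i : ℚ) * S a i) = (∑ i, (cZ i : ℚ) * S b i) := by
        linarith [hr]
      simp only [Pi.sub_apply, mul_sub]
      rw [Finset.sum_sub_distrib, hsum, sub_self]
end

section
/- Let Φ(t₁,...,t_h) = Σⱼ φⱼtⱼ be a nonzero linear form with rational coefficients. Every nonempty finite set A of real numbers is Φ-isomorphic to a finite set of positive integers. -/
open Finset

/-- Over `ℚ` (an infinite field), there is a linear functional not vanishing on any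
element of a given finite set of nonzero vectors. -/
lemma aux_dual_stmt10 {V : Type*} [AddCommGroup V] [Module ℚ V] (S : Finset V)
    (hS : (0 : V) ∉ S) : ∃ f : Module.Dual ℚ V, ∀ v ∈ S, f v ≠ 0 := by
  by_contra hc
  push_neg at hc
  have hcov : ⋃ v : S, ((LinearMap.ker (LinearMap.applyₗ (v : V)) :
      Subspace ℚ (Module.Dual ℚ V)) : Set (Module.Dual ℚ V)) = Set.univ := by
    ext f
    simp only [Set.mem_iUnion, Set.mem_univ, iff_true, SetLike.mem_coe, LinearMap.mem_ker]
    obtain ⟨v, hv, hfv⟩ := hc f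
    exact ⟨⟨v, hv⟩, hfv⟩
  obtain ⟨v, hv⟩ := Subspace.exists_eq_top_of_iUnion_eq_univ hcov
  have hv0 : (v : V) = 0 := by
    rw [← Module.forall_dual_apply_eq_zero_iff ℚ]
    intro f
    have hf : f ∈ (⊤ : Subspace ℚ (Module.Dual ℚ V)) := trivial
    rw [← hv] at hf
    exact hf
  exact hS (hv0 ▸ v.2)

open Finset in
/-- Theorem 4: every nonempty finite set of real numbers is `Φ`-isomorphic to a
set of positive integers, for any nonzero linear form `Φ` with rational
coefficients. -/
theorem stmt_10 (h : ℕ) (φ : Fin h → ℚ) (hφ : φ ≠ 0)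
    (A : Finset ℝ) (hA : A.Nonempty) :
    ∃ (B : Finset ℤ) (f : ℝ → ℤ),
      (∀ b ∈ B, 0 < b) ∧ Set.BijOn f A B ∧
      ∀ a b : Fin h → ℝ, (∀ j, a j ∈ A) → (∀ j, b j ∈ A) →
        ((∑ j, (φ j : ℝ) * a j = ∑ j, (φ j : ℝ) * b j) ↔
          (∑ j, φ j * (f (a j) : ℚ) = ∑ j, φ j * (f (b j) : ℚ))) := by
  classical
  set V : Submodule ℚ ℝ := Submodule.span ℚ (A : Set ℝ) with hV
  let inc : {x // x ∈ A} → V := fun a => ⟨a.1, Submodule.subset_span a.2⟩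
  let w : ((Fin h → {x // x ∈ A}) × (Fin h → {x // x ∈ A})) → V :=
    fun pq => (∑ j, φ j • inc (pq.1 j)) - ∑ j, φ j • inc (pq.2 j)
  let S : Finset V :=
    ((Finset.univ.image w) ∪
      (Finset.univ.image (fun ab : {x // x ∈ A} × {x // x ∈ A} => inc ab.1 - inc ab.2))).filter
      (· ≠ 0)
  have hS0 : (0 : V) ∉ S := by simp [S]
  obtain ⟨T, hT⟩ := aux_dual_stmt10 S hS0
  -- coercion of the weighted sums
  have hcoe : ∀ p : Fin h → {x // x ∈ A},
      ((∑ j, φ j • inc (p j) : V) : ℝ) = ∑ j, (φ j : ℝ) * ((p j : ℝ)) := by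
    intro p
    rw [AddSubmonoidClass.coe_finset_sum]
    refine Finset.sum_congr rfl fun j _ => ?_
    rw [SetLike.val_smul, Rat.smul_def]
  -- w vanishes iff the real relation holds
  have hw0 : ∀ p q : Fin h → {x // x ∈ A},
      w (p, q) = 0 ↔ ∑ j, (φ j : ℝ) * ((p j : ℝ)) = ∑ j, (φ j : ℝ) * ((q j : ℝ)) := by
    intro p q
    rw [← sub_eq_zero (b := ∑ j, (φ j : ℝ) * ((q j : ℝ))), ← hcoe, ← hcoe]
    constructor
    · intro h0
      have := congrArg (Subtype.val) h0
      simpa [w] using this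
    · intro h0
      apply Subtype.ext
      simpa [w] using h0
  -- T detects vanishing on elements of the candidate sets
  have hTzero : ∀ v : V,
      (v ∈ Finset.univ.image w ∨
        v ∈ Finset.univ.image (fun ab : {x // x ∈ A} × {x // x ∈ A} => inc ab.1 - inc ab.2)) →
      (T v = 0 ↔ v = 0) := by
    intro v hv
    constructor
    · intro hTv
      by_contra hv0
      refine hT v ?_ hTv
      simp only [S, Finset.mem_filter, Finset.mem_union]
      exact ⟨by tauto, hv0⟩
    · rintro rfl; exact map_zero T
  -- the rational representative
  set g : ℝ → ℚ := fun x => if hx : x ∈ V then T ⟨x, hx⟩ else 0 with hg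
  have hgA : ∀ (x : {y // y ∈ A}), g x = T (inc x) := by
    intro x
    have hx : (x : ℝ) ∈ V := Submodule.subset_span x.2
    simp only [hg, dif_pos hx]
    rfl
  have hTsumEq : ∀ p : Fin h → {x // x ∈ A},
      ∑ j, φ j * g ((p j : ℝ)) = T (∑ j, φ j • inc (p j)) := by
    intro p
    rw [map_sum]
    refine Finset.sum_congr rfl fun j _ => ?_
    rw [map_smul, smul_eq_mul, hgA]
  -- main equivalence at the level of g
  have hmain : ∀ p q : Fin h → {x // x ∈ A},
      (∑ j, (φ j : ℝ) * ((p j : ℝ)) = ∑ j, (φ j : ℝ) * ((q j : ℝ))) ↔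
        ∑ j, φ j * g ((p j : ℝ)) = ∑ j, φ j * g ((q j : ℝ)) := by
    intro p q
    rw [← hw0, hTsumEq, hTsumEq, ← sub_eq_zero (a := T _), ← map_sub]
    have : (∑ j, φ j • inc (p j)) - ∑ j, φ j • inc (q j) = w (p, q) := rfl
    rw [this]
    exact (hTzero (w (p, q)) (Or.inl (Finset.mem_image_of_mem w (Finset.mem_univ _)))).symm
  -- g is injective on A
  have hginj : ∀ x y : {z // z ∈ A}, g x = g y → (x : ℝ) = (y : ℝ) := by
    intro x y hxy
    rw [hgA, hgA] at hxy
    have hT0 : T (inc x - inc y) = 0 := by rw [map_sub, hxy, sub_self]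
    have := (hTzero _ (Or.inr (Finset.mem_image_of_mem _ (Finset.mem_univ (x, y))))).mp hT0
    have := congrArg Subtype.val this
    have hxy' : (x : ℝ) - (y : ℝ) = 0 := by simpa [inc] using this
    linarith [hxy']
  -- clear denominators
  set N : ℕ := ∏ a ∈ A, (g a).den with hNdef
  have hNpos : 0 < N := Finset.prod_pos fun a _ => (g a).pos
  have hNint : ∀ x ∈ A, ∃ z : ℤ, (N : ℚ) * g x = (z : ℚ) := by
    intro x hx
    obtain ⟨k, hk⟩ := Finset.dvd_prod_of_mem (fun a => (g a).den) hx
    refine ⟨(k : ℤ) * (g x).num, ?_⟩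
    have hk' : N = (g x).den * k := hk
    rw [hk']
    push_cast
    rw [mul_comm ((g x).den : ℚ) (k : ℚ), mul_assoc, Rat.den_mul_eq_num]
  set M : ℤ := 1 + ∑ a ∈ A, |⌊(N : ℚ) * g a⌋| with hMdef
  set f : ℝ → ℤ := fun x => ⌊(N : ℚ) * g x⌋ + M with hf
  have hfa : ∀ x ∈ A, ((f x : ℚ)) = (N : ℚ) * g x + (M : ℚ) := by
    intro x hx
    obtain ⟨z, hz⟩ := hNint x hx
    rw [hf]
    simp only [hz, Int.floor_intCast]
    push_cast
    ring
  have hfpos : ∀ x ∈ A, 0 < f x := by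
    intro x hx
    have h1 : |⌊(N : ℚ) * g x⌋| ≤ ∑ a ∈ A, |⌊(N : ℚ) * g a⌋| :=
      Finset.single_le_sum (f := fun a => |⌊(N : ℚ) * g a⌋|) (fun a _ => abs_nonneg _) hx
    have h2 : -⌊(N : ℚ) * g x⌋ ≤ |⌊(N : ℚ) * g x⌋| := neg_le_abs _
    simp only [hf, hMdef]
    linarith
  have hfinj : Set.InjOn f A := by
    intro x hx y hy hxy
    have hc : ((f x : ℚ)) = ((f y : ℚ)) := congrArg (fun z : ℤ => (z : ℚ)) hxy
    rw [hfa x hx, hfa y hy] at hc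
    have hgxy : g x = g y := by
      have hN0 : (N : ℚ) ≠ 0 := by positivity
      exact mul_left_cancel₀ hN0 (add_right_cancel hc)
    exact hginj ⟨x, hx⟩ ⟨y, hy⟩ hgxy
  refine ⟨A.image f, f, ?_, ?_, ?_⟩
  · intro b hb
    obtain ⟨a, ha, rfl⟩ := Finset.mem_image.mp hb
    exact hfpos a ha
  · rw [Finset.coe_image]
    exact hfinj.bijOn_image
  · intro a b ha hb
    have expand : ∀ (c : Fin h → ℝ), (∀ j, c j ∈ A) →
        ∑ j, φ j * ((f (c j)) : ℚ) =
          (N : ℚ) * (∑ j, φ j * g (c j)) + (∑ j, φ j) * (M : ℚ) := by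
      intro c hc
      rw [Finset.mul_sum, Finset.sum_mul, ← Finset.sum_add_distrib]
      refine Finset.sum_congr rfl fun j _ => ?_
      rw [hfa _ (hc j)]
      ring
    rw [expand a ha, expand b hb]
    have := hmain (fun j => ⟨a j, ha j⟩) (fun j => ⟨b j, hb j⟩)
    simp only at this
    rw [this]
    constructor
    · intro h'; rw [h']
    · intro h'
      have hN0 : (N : ℚ) ≠ 0 := by positivity
      have := add_right_cancel h'
      exact mul_left_cancel₀ hN0 this
end

section
/- Let A be a finite set of real numbers with |A| ≥ 2, Φ a nonzero linear form with integer coefficients, δ* the minimum gap between distinct elements of Φ(A^h), and ε < min(δ*,1)/(2hφ*) where φ* = maxⱼ|φⱼ|. If q is a positive integer and b₁,...,b_k are integers with |qaᵢ - bᵢ| < ε for all i, then the map aᵢ ↦ bᵢ is a Φ-isomorphism from A to B = {b₁,...,b_k}. -/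
open Finset in
/-- Diophantine approximation step: if `|q aᵢ - bᵢ| < ε` with
`ε < min(δ*,1)/(2hφ*)`, then `aᵢ ↦ bᵢ` is a `Φ`-isomorphism. -/
theorem stmt_11 (h k : ℕ) (hk : 2 ≤ k)
    (a : Fin k → ℝ) (ha : Function.Injective a)
    (φ : Fin h → ℤ) (hφ : φ ≠ 0)
    (φstar : ℤ) (hφstar : ∀ j, |φ j| ≤ φstar)
    (δstar : ℝ) (hδpos : 0 < δstar)
    (hδ : ∀ σ τ : Fin h → Fin k,
      (∑ j, (φ j : ℝ) * a (σ j)) ≠ (∑ j, (φ j : ℝ) * a (τ j)) →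
      δstar ≤ |(∑ j, (φ j : ℝ) * a (σ j)) - ∑ j, (φ j : ℝ) * a (τ j)|)
    (ε : ℝ) (hε : 0 < ε) (hεlt : ε < min δstar 1 / (2 * h * (φstar : ℝ)))
    (q : ℕ) (hq : 0 < q) (b : Fin k → ℤ)
    (hb : ∀ i, |q * a i - (b i : ℝ)| < ε) :
    Function.Injective b ∧
    ∀ σ τ : Fin h → Fin k,
      ((∑ j, (φ j : ℝ) * a (σ j)) = ∑ j, (φ j : ℝ) * a (τ j)) ↔
        ((∑ j, φ j * b (σ j)) = ∑ j, φ j * b (τ j)) := by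
  obtain ⟨j₀, hj₀⟩ : ∃ j, φ j ≠ 0 := by
    by_contra hc; push_neg at hc; exact hφ (funext hc)
  have hφs1 : (1:ℤ) ≤ φstar := le_trans (Int.one_le_abs hj₀) (hφstar j₀)
  have hφsR : (1:ℝ) ≤ (φstar : ℝ) := by exact_mod_cast hφs1
  have hhpos : 0 < h := j₀.pos
  have hhR : (1:ℝ) ≤ (h : ℝ) := by exact_mod_cast Nat.one_le_iff_ne_zero.mpr hhpos.ne'
  have hden : (0:ℝ) < 2 * h * (φstar : ℝ) := by nlinarith
  have hkey : 2 * (h:ℝ) * (φstar : ℝ) * ε < min δstar 1 := by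
    rw [lt_div_iff₀ hden] at hεlt; linarith
  have hkey1 : 2 * (h:ℝ) * (φstar : ℝ) * ε < 1 := hkey.trans_le (min_le_right _ _)
  have hkeyδ : 2 * (h:ℝ) * (φstar : ℝ) * ε < δstar := hkey.trans_le (min_le_left _ _)
  -- key bound
  have hbound : ∀ σ : Fin h → Fin k,
      |(q:ℝ) * (∑ j, (φ j : ℝ) * a (σ j)) - ((∑ j, φ j * b (σ j) : ℤ) : ℝ)|
        < (h:ℝ) * (φstar:ℝ) * ε := by
    intro σ
    push_cast
    rw [Finset.mul_sum, ← Finset.sum_sub_distrib]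
    calc |∑ j, ((q:ℝ) * ((φ j:ℝ) * a (σ j)) - (φ j:ℝ) * (b (σ j) : ℝ))|
        ≤ ∑ j, |(q:ℝ) * ((φ j:ℝ) * a (σ j)) - (φ j:ℝ) * (b (σ j) : ℝ)| :=
          Finset.abs_sum_le_sum_abs _ _
      _ < ∑ _j : Fin h, (φstar:ℝ) * ε := by
          apply Finset.sum_lt_sum_of_nonempty
          · exact Finset.univ_nonempty_iff.mpr ⟨j₀⟩
          · intro j _
            have h1 : (q:ℝ) * ((φ j:ℝ) * a (σ j)) - (φ j:ℝ) * (b (σ j) : ℝ)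
                = (φ j:ℝ) * ((q:ℝ) * a (σ j) - (b (σ j) : ℝ)) := by ring
            rw [h1, abs_mul]
            have h2 : |(φ j : ℝ)| ≤ (φstar : ℝ) := by
              have := hφstar j
              rw [← Int.cast_abs]
              exact_mod_cast this
            have h3 := hb (σ j)
            calc |(φ j:ℝ)| * |(q:ℝ) * a (σ j) - (b (σ j) : ℝ)|
                ≤ (φstar:ℝ) * |(q:ℝ) * a (σ j) - (b (σ j) : ℝ)| :=
                  mul_le_mul_of_nonneg_right h2 (abs_nonneg _)
              _ < (φstar:ℝ) * ε := by
                  apply mul_lt_mul_of_pos_left h3; linarith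
      _ = (h:ℝ) * (φstar:ℝ) * ε := by
          rw [Finset.sum_const, Finset.card_univ, Fintype.card_fin, nsmul_eq_mul]; ring
  have main : ∀ σ τ : Fin h → Fin k,
      ((∑ j, (φ j : ℝ) * a (σ j)) = ∑ j, (φ j : ℝ) * a (τ j)) ↔
        ((∑ j, φ j * b (σ j)) = ∑ j, φ j * b (τ j)) := by
    intro σ τ
    have h1 := hbound σ
    have h2 := hbound τ
    constructor
    · intro heq
      have hZ : |((∑ j, φ j * b (σ j)) - (∑ j, φ j * b (τ j)) : ℤ)| < 1 := by
        have hR : |(((∑ j, φ j * b (σ j)) - (∑ j, φ j * b (τ j)) : ℤ) : ℝ)| < 1 := by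
          push_cast
          rw [abs_lt] at h1 h2 ⊢
          push_cast at h1 h2
          constructor <;> [nlinarith [heq]; nlinarith [heq]]
        exact_mod_cast hR
      have := abs_lt.mp hZ
      omega
    · intro heq
      by_contra hne
      have hd := hδ σ τ hne
      have hq1 : (1:ℝ) ≤ (q:ℝ) := by exact_mod_cast hq
      have hle : |(∑ j, (φ j : ℝ) * a (σ j)) - ∑ j, (φ j : ℝ) * a (τ j)|
          ≤ |(q:ℝ) * (∑ j, (φ j : ℝ) * a (σ j)) - (q:ℝ) * (∑ j, (φ j : ℝ) * a (τ j))| := by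
        have : (q:ℝ) * (∑ j, (φ j : ℝ) * a (σ j)) - (q:ℝ) * (∑ j, (φ j : ℝ) * a (τ j))
            = (q:ℝ) * ((∑ j, (φ j : ℝ) * a (σ j)) - ∑ j, (φ j : ℝ) * a (τ j)) := by ring
        rw [this, abs_mul, Nat.abs_cast]
        exact le_mul_of_one_le_left (abs_nonneg _) hq1
      have heqR : ((∑ j, φ j * b (σ j) : ℤ) : ℝ) = ((∑ j, φ j * b (τ j) : ℤ) : ℝ) := by
        exact_mod_cast heq
      rw [abs_lt] at h1 h2
      have habs : |(q:ℝ) * (∑ j, (φ j : ℝ) * a (σ j)) - (q:ℝ) * (∑ j, (φ j : ℝ) * a (τ j))|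
          < 2 * (h:ℝ) * (φstar:ℝ) * ε := by
        rw [abs_lt]; constructor <;> nlinarith [heqR]
      linarith
  refine ⟨?_, main⟩
  intro i i' hbi
  set σ : Fin h → Fin k := fun _ => i with hσ
  set τ : Fin h → Fin k := fun j => if j = j₀ then i' else i with hτ
  have hSb : (∑ j, φ j * b (σ j)) = ∑ j, φ j * b (τ j) := by
    apply Finset.sum_congr rfl
    intro j _
    by_cases hj : j = j₀ <;> simp [hσ, hτ, hj, hbi]
  have hSa := (main σ τ).mpr hSb
  have hsplit : (∑ j, (φ j : ℝ) * a (σ j)) - (∑ j, (φ j : ℝ) * a (τ j))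
      = (φ j₀ : ℝ) * (a i - a i') := by
    rw [← Finset.sum_sub_distrib]
    rw [Finset.sum_eq_single j₀]
    · simp [hσ, hτ, mul_sub]
    · intro j _ hj; simp [hσ, hτ, hj]
    · intro hj; exact absurd (Finset.mem_univ j₀) hj
  have : (φ j₀ : ℝ) * (a i - a i') = 0 := by rw [← hsplit, hSa]; ring
  have hφ0 : (φ j₀ : ℝ) ≠ 0 := by exact_mod_cast hj₀
  have := mul_eq_zero.mp this
  rcases this with h' | h'
  · exact absurd h' hφ0
  · exact ha (by linarith)
end

section
/- Let A* = {0, 2, 3, 4, 7, 11, 12, 14} ⊆ ℤ, let G be a 2-divisible abelian group, and let f : A* → G be a Freiman isomorphism onto its image. Then f(x) = x·((f(2) - f(0))/2) + f(0) for all x ∈ A*; that is, f is affine. -/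
/-- Theorem 7: a Freiman isomorphism from `A* = {0,2,3,4,7,11,12,14}` into a
2-divisible abelian group is the affine map `x ↦ x·((f 2 - f 0)/2) + f 0`. -/
theorem stmt_14 {G : Type*} [AddCommGroup G]
    (hdiv : ∀ a : G, ∃ x : G, x + x = a)
    (f : ℤ → G)
    (hinj : Set.InjOn f (({0, 2, 3, 4, 7, 11, 12, 14} : Finset ℤ) : Set ℤ))
    (hFreiman : ∀ a₁ ∈ ({0, 2, 3, 4, 7, 11, 12, 14} : Finset ℤ),
      ∀ a₂ ∈ ({0, 2, 3, 4, 7, 11, 12, 14} : Finset ℤ),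
      ∀ a₃ ∈ ({0, 2, 3, 4, 7, 11, 12, 14} : Finset ℤ),
      ∀ a₄ ∈ ({0, 2, 3, 4, 7, 11, 12, 14} : Finset ℤ),
      (a₁ + a₂ = a₃ + a₄ ↔ f a₁ + f a₂ = f a₃ + f a₄)) :
    ∃ g : G, g + g = f 2 - f 0 ∧
      ∀ x ∈ ({0, 2, 3, 4, 7, 11, 12, 14} : Finset ℤ), f x = x • g + f 0 := by
  have m0 : (0:ℤ) ∈ ({0, 2, 3, 4, 7, 11, 12, 14} : Finset ℤ) := by decide
  have m2 : (2:ℤ) ∈ ({0, 2, 3, 4, 7, 11, 12, 14} : Finset ℤ) := by decide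
  have m3 : (3:ℤ) ∈ ({0, 2, 3, 4, 7, 11, 12, 14} : Finset ℤ) := by decide
  have m4 : (4:ℤ) ∈ ({0, 2, 3, 4, 7, 11, 12, 14} : Finset ℤ) := by decide
  have m7 : (7:ℤ) ∈ ({0, 2, 3, 4, 7, 11, 12, 14} : Finset ℤ) := by decide
  have m11 : (11:ℤ) ∈ ({0, 2, 3, 4, 7, 11, 12, 14} : Finset ℤ) := by decide
  have m12 : (12:ℤ) ∈ ({0, 2, 3, 4, 7, 11, 12, 14} : Finset ℤ) := by decide
  have m14 : (14:ℤ) ∈ ({0, 2, 3, 4, 7, 11, 12, 14} : Finset ℤ) := by decide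
  obtain ⟨g₀, hA⟩ := hdiv (f 2 - f 0)
  have hB : f 0 + f 4 = f 2 + f 2 := (hFreiman 0 m0 4 m4 2 m2 2 m2).mp (by ring)
  have hK : f 3 + f 3 = f 2 + f 4 := (hFreiman 3 m3 3 m3 2 m2 4 m4).mp (by ring)
  have hC : f 0 + f 7 = f 3 + f 4 := (hFreiman 0 m0 7 m7 3 m3 4 m4).mp (by ring)
  have hD : f 7 + f 7 = f 3 + f 11 := (hFreiman 7 m7 7 m7 3 m3 11 m11).mp (by ring)
  have hE : f 0 + f 14 = f 3 + f 11 := (hFreiman 0 m0 14 m14 3 m3 11 m11).mp (by ring)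
  have hF : f 2 + f 14 = f 4 + f 12 := (hFreiman 2 m2 14 m14 4 m4 12 m12).mp (by ring)
  refine ⟨f 3 - f 0 - g₀ - g₀, ?_, ?_⟩
  · linear_combination (norm := module) hK + hB - (2:ℤ) • hA
  · intro x hx
    fin_cases hx
    · linear_combination (norm := module) (0:ℤ) • hA
    · linear_combination (norm := module) (2:ℤ) • hA - hK - hB
    · linear_combination (norm := module) (3:ℤ) • hA - hK - hB
    · linear_combination (norm := module) (4:ℤ) • hA - (2:ℤ) • hK - hB
    · linear_combination (norm := module)
        (7:ℤ) • hA - (3:ℤ) • hK - (2:ℤ) • hB + hC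
    · linear_combination (norm := module)
        (11:ℤ) • hA - (5:ℤ) • hK - (3:ℤ) • hB + (2:ℤ) • hC - hD
    · linear_combination (norm := module)
        (12:ℤ) • hA - (5:ℤ) • hK - (4:ℤ) • hB + (2:ℤ) • hC - hD + hE - hF
    · linear_combination (norm := module)
        (14:ℤ) • hA - (6:ℤ) • hK - (4:ℤ) • hB + (2:ℤ) • hC - hD + hE
end

section
/- Every MSTD set A of real numbers with |A| = 8 is affinely isomorphic to A* = {0, 2, 3, 4, 7, 11, 12, 14}; that is, there exist real λ ≠ 0 and μ with A = λ∗A* + μ. (This may be proved assuming Hegarty's classification that every 8-element MSTD set of integers is affinely isomorphic to A*.) -/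
open Pointwise

private lemma card_image_congr {α β γ : Type*} [DecidableEq β] [DecidableEq γ]
    (s : Finset α) (f : α → β) (g : α → γ)
    (h : ∀ x ∈ s, ∀ y ∈ s, (f x = f y ↔ g x = g y)) :
    (s.image f).card = (s.image g).card := by
  classical
  have h1 : (s.image fun x => (f x, g x)).image Prod.fst = s.image f := by
    rw [Finset.image_image]; rfl
  have h2 : (s.image fun x => (f x, g x)).image Prod.snd = s.image g := by
    rw [Finset.image_image]; rfl
  have inj1 : Set.InjOn Prod.fst ((s.image fun x => (f x, g x)) : Set (β × γ)) := by
    intro p hp q hq hpq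
    rw [Finset.mem_coe, Finset.mem_image] at hp hq
    obtain ⟨x, hx, rfl⟩ := hp
    obtain ⟨y, hy, rfl⟩ := hq
    exact Prod.ext hpq ((h x hx y hy).mp hpq)
  have inj2 : Set.InjOn Prod.snd ((s.image fun x => (f x, g x)) : Set (β × γ)) := by
    intro p hp q hq hpq
    rw [Finset.mem_coe, Finset.mem_image] at hp hq
    obtain ⟨x, hx, rfl⟩ := hp
    obtain ⟨y, hy, rfl⟩ := hq
    exact Prod.ext ((h x hx y hy).mpr hpq) hpq
  have c1 := Finset.card_image_of_injOn inj1
  have c2 := Finset.card_image_of_injOn inj2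
  rw [h1] at c1
  rw [h2] at c2
  rw [c1, c2]

private lemma exists_functional :
    ∀ D : Finset ℝ, (0 : ℝ) ∉ D → ∃ f : ℝ →ₗ[ℚ] ℚ, ∀ d ∈ D, f d ≠ 0 := by
  classical
  intro D
  induction D using Finset.induction_on with
  | empty => exact fun _ => ⟨0, by simp⟩
  | @insert a s ha ih =>
    intro h0
    obtain ⟨f, hf⟩ := ih (fun hs => h0 (Finset.mem_insert_of_mem hs))
    have ha0 : a ≠ 0 := fun h => h0 (h ▸ Finset.mem_insert_self a s)
    have hgex : ¬ ∀ φ : Module.Dual ℚ ℝ, φ a = 0 := by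
      rw [Module.forall_dual_apply_eq_zero_iff]; exact ha0
    push_neg at hgex
    obtain ⟨g, hg⟩ := hgex
    obtain ⟨c, hc⟩ := Infinite.exists_notMem_finset
      ((insert a s).image fun x => (-(f x)) / (g x))
    refine ⟨f + c • (g : ℝ →ₗ[ℚ] ℚ), ?_⟩
    intro d hd
    simp only [LinearMap.add_apply, LinearMap.smul_apply, smul_eq_mul]
    intro hzero
    by_cases hgd : g d = 0
    · rw [hgd, mul_zero, add_zero] at hzero
      rcases Finset.mem_insert.mp hd with rfl | hd'
      · exact hg hgd
      · exact hf d hd' hzero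
    · apply hc
      refine Finset.mem_image.mpr ⟨d, hd, ?_⟩
      rw [div_eq_iff hgd]
      linarith

/-- Theorem 8 (Newman): assuming Hegarty's classification of 8-element MSTD
sets of integers, every 8-element MSTD set of real numbers is affinely
isomorphic to `A* = {0,2,3,4,7,11,12,14}`. -/
theorem stmt_15
    (hegarty : ∀ B : Finset ℤ, (B - B).card < (B + B).card →
      8 ≤ B.card ∧ (B.card = 8 → ∃ l m : ℝ, l ≠ 0 ∧
        B.image (fun x : ℤ => (x : ℝ)) =
          ({0, 2, 3, 4, 7, 11, 12, 14} : Finset ℝ).image (fun x => l * x + m)))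
    (A : Finset ℝ) (hMSTD : (A - A).card < (A + A).card) (hcard : A.card = 8) :
    ∃ l m : ℝ, l ≠ 0 ∧
      A = ({0, 2, 3, 4, 7, 11, 12, 14} : Finset ℝ).image (fun x => l * x + m) := by
  classical
  obtain ⟨f, hf⟩ := exists_functional (((A + A) - (A + A)).erase 0)
    (Finset.notMem_erase _ _)
  set N : ℤ := ∏ a ∈ A, ((f a).den : ℤ) with hNdef
  have hNpos : 0 < N := Finset.prod_pos (fun a _ => by exact_mod_cast (f a).pos)
  set zf : ℝ → ℤ := fun x => ((N : ℚ) * f x).num with hzfdef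
  -- key cast identity
  have hz : ∀ a ∈ A, ((zf a : ℤ) : ℚ) = (N : ℚ) * f a := by
    intro a ha
    have hdvd : ((f a).den : ℤ) ∣ N :=
      Finset.dvd_prod_of_mem (fun a => ((f a).den : ℤ)) ha
    obtain ⟨k, hk⟩ := hdvd
    have hden : ((f a).den : ℚ) ≠ 0 := by
      exact_mod_cast (f a).den_nz
    have hnum : ((f a).den : ℚ) * f a = ((f a).num : ℚ) := by
      rw [mul_comm, ← eq_div_iff hden]
      exact (Rat.num_div_den (f a)).symm
    have hzz : ((k * (f a).num : ℤ) : ℚ) = (N : ℚ) * f a := by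
      push_cast [hk]
      calc (k : ℚ) * ((f a).num : ℚ) = (k : ℚ) * (((f a).den : ℚ) * f a) := by rw [hnum]
        _ = ((f a).den : ℚ) * (k : ℚ) * f a := by ring
    rw [hzfdef]
    simp only
    rw [← hzz, Rat.num_intCast]
  have hNq : (N : ℚ) ≠ 0 := by exact_mod_cast hNpos.ne'
  -- Freiman isomorphism of order 2
  have hFr : ∀ a ∈ A, ∀ b ∈ A, ∀ c ∈ A, ∀ d ∈ A,
      (a + b = c + d ↔ zf a + zf b = zf c + zf d) := by
    intro a ha b hb c hc d hd
    constructor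
    · intro h
      have h1 : f a + f b = f c + f d := by
        simpa [map_add] using congrArg f h
      have h2 : ((zf a + zf b : ℤ) : ℚ) = ((zf c + zf d : ℤ) : ℚ) := by
        push_cast
        rw [hz a ha, hz b hb, hz c hc, hz d hd, ← mul_add, ← mul_add, h1]
      exact_mod_cast h2
    · intro h
      by_contra hne
      have hmem : (a + b) - (c + d) ∈ (((A + A) - (A + A)).erase 0) :=
        Finset.mem_erase.mpr ⟨sub_ne_zero.mpr hne,
          Finset.sub_mem_sub (Finset.add_mem_add ha hb) (Finset.add_mem_add hc hd)⟩
      apply hf _ hmem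
      have h2 : (N : ℚ) * (f a + f b) = (N : ℚ) * (f c + f d) := by
        rw [mul_add, mul_add, ← hz a ha, ← hz b hb, ← hz c hc, ← hz d hd]
        exact_mod_cast congrArg (fun n : ℤ => (n : ℚ)) h
      have h3 := mul_left_cancel₀ hNq h2
      simp only [map_sub, map_add]
      linarith
  have hzinj : ∀ a ∈ A, ∀ c ∈ A, zf a = zf c → a = c := by
    intro a ha c hc h
    have := (hFr a ha a ha c hc a ha).mpr (by omega)
    linarith
  set B : Finset ℤ := A.image zf with hBdef
  have hcardB : B.card = 8 := by
    rw [hBdef, Finset.card_image_of_injOn, hcard]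
    intro a ha c hc h
    exact hzinj a (by simpa using ha) c (by simpa using hc) h
  -- cardinalities of sumset and difference set are preserved
  have hBBeq : B + B = (A ×ˢ A).image fun p => zf p.1 + zf p.2 := by
    rw [Finset.add_def]
    ext x
    simp only [Finset.mem_image, Finset.mem_product, hBdef]
    constructor
    · rintro ⟨⟨u, v⟩, ⟨hu, hv⟩, rfl⟩
      obtain ⟨a, ha, rfl⟩ := hu
      obtain ⟨b, hb, rfl⟩ := hv
      exact ⟨(a, b), ⟨ha, hb⟩, rfl⟩
    · rintro ⟨⟨a, b⟩, ⟨ha, hb⟩, rfl⟩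
      exact ⟨(zf a, zf b), ⟨⟨a, ha, rfl⟩, ⟨b, hb, rfl⟩⟩, rfl⟩
  have hBBsub : B - B = (A ×ˢ A).image fun p => zf p.1 - zf p.2 := by
    rw [Finset.sub_def]
    ext x
    simp only [Finset.mem_image, Finset.mem_product, hBdef]
    constructor
    · rintro ⟨⟨u, v⟩, ⟨hu, hv⟩, rfl⟩
      obtain ⟨a, ha, rfl⟩ := hu
      obtain ⟨b, hb, rfl⟩ := hv
      exact ⟨(a, b), ⟨ha, hb⟩, rfl⟩
    · rintro ⟨⟨a, b⟩, ⟨ha, hb⟩, rfl⟩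
      exact ⟨(zf a, zf b), ⟨⟨a, ha, rfl⟩, ⟨b, hb, rfl⟩⟩, rfl⟩
  have hsumcard : (B + B).card = (A + A).card := by
    rw [hBBeq, Finset.add_def]
    refine (card_image_congr (A ×ˢ A) _ _ ?_).symm
    rintro ⟨a, b⟩ hab ⟨c, d⟩ hcd
    rw [Finset.mem_product] at hab hcd
    exact hFr a hab.1 b hab.2 c hcd.1 d hcd.2
  have hsubcard : (B - B).card = (A - A).card := by
    rw [hBBsub, Finset.sub_def]
    refine (card_image_congr (A ×ˢ A) _ _ ?_).symm
    rintro ⟨a, b⟩ hab ⟨c, d⟩ hcd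
    rw [Finset.mem_product] at hab hcd
    have h1 : a - b = c - d ↔ a + d = c + b := by constructor <;> intro <;> linarith
    have h2 : zf a - zf b = zf c - zf d ↔ zf a + zf d = zf c + zf b := by omega
    rw [h1, h2]
    exact hFr a hab.1 d hcd.2 c hcd.1 b hab.2
  have hBm : (B - B).card < (B + B).card := by rw [hsubcard, hsumcard]; exact hMSTD
  obtain ⟨-, h8⟩ := hegarty B hBm
  obtain ⟨l, m, hl, himg⟩ := h8 hcardB
  have hAF : A.image (fun a => ((zf a : ℤ) : ℝ)) =
      ({0, 2, 3, 4, 7, 11, 12, 14} : Finset ℝ).image (fun x => l * x + m) := by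
    rw [← himg, hBdef, Finset.image_image]
    rfl
  have hex : ∀ s : ℝ, s ∈ ({0, 2, 3, 4, 7, 11, 12, 14} : Finset ℝ) →
      ∃ a ∈ A, ((zf a : ℤ) : ℝ) = l * s + m := by
    intro s hs
    have hmem : l * s + m ∈ A.image (fun a => ((zf a : ℤ) : ℝ)) := by
      rw [hAF]; exact Finset.mem_image_of_mem _ hs
    simpa [Finset.mem_image] using hmem
  obtain ⟨a0, ha0, e0⟩ := hex 0 (by norm_num [Finset.mem_insert])
  obtain ⟨a2, ha2, e2⟩ := hex 2 (by norm_num [Finset.mem_insert])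
  obtain ⟨a3, ha3, e3⟩ := hex 3 (by norm_num [Finset.mem_insert])
  obtain ⟨a4, ha4, e4⟩ := hex 4 (by norm_num [Finset.mem_insert])
  obtain ⟨a7, ha7, e7⟩ := hex 7 (by norm_num [Finset.mem_insert])
  obtain ⟨a11, ha11, e11⟩ := hex 11 (by norm_num [Finset.mem_insert])
  obtain ⟨a12, ha12, e12⟩ := hex 12 (by norm_num [Finset.mem_insert])
  obtain ⟨a14, ha14, e14⟩ := hex 14 (by norm_num [Finset.mem_insert])
  -- transfer additive relations of A* back to A
  have rel : ∀ x ∈ A, ∀ y ∈ A, ∀ u ∈ A, ∀ v ∈ A, ∀ sx sy su sv : ℝ,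
      ((zf x : ℤ) : ℝ) = l * sx + m → ((zf y : ℤ) : ℝ) = l * sy + m →
      ((zf u : ℤ) : ℝ) = l * su + m → ((zf v : ℤ) : ℝ) = l * sv + m →
      sx + sy = su + sv → x + y = u + v := by
    intro x hx y hy u hu v hv sx sy su sv ex ey eu ev hs
    refine (hFr x hx y hy u hu v hv).mpr ?_
    have : ((zf x + zf y : ℤ) : ℝ) = ((zf u + zf v : ℤ) : ℝ) := by
      push_cast
      rw [ex, ey, eu, ev]
      linear_combination l * hs
    exact_mod_cast this
  have r1 : a0 + a4 = a2 + a2 :=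
    rel a0 ha0 a4 ha4 a2 ha2 a2 ha2 0 4 2 2 e0 e4 e2 e2 (by norm_num)
  have r2 : a2 + a4 = a3 + a3 :=
    rel a2 ha2 a4 ha4 a3 ha3 a3 ha3 2 4 3 3 e2 e4 e3 e3 (by norm_num)
  have r3 : a0 + a7 = a3 + a4 :=
    rel a0 ha0 a7 ha7 a3 ha3 a4 ha4 0 7 3 4 e0 e7 e3 e4 (by norm_num)
  have r4 : a0 + a14 = a7 + a7 :=
    rel a0 ha0 a14 ha14 a7 ha7 a7 ha7 0 14 7 7 e0 e14 e7 e7 (by norm_num)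
  have r5 : a0 + a14 = a2 + a12 :=
    rel a0 ha0 a14 ha14 a2 ha2 a12 ha12 0 14 2 12 e0 e14 e2 e12 (by norm_num)
  have r6 : a0 + a14 = a3 + a11 :=
    rel a0 ha0 a14 ha14 a3 ha3 a11 ha11 0 14 3 11 e0 e14 e3 e11 (by norm_num)
  set lam : ℝ := (a2 - a0) / 2 with hlamdef
  set mu : ℝ := a0 with hmudef
  have hlam : lam ≠ 0 := by
    intro h
    apply hl
    have h20 : a2 = a0 := by rw [hlamdef] at h; linarith [h]
    have hzz : ((zf a2 : ℤ) : ℝ) = ((zf a0 : ℤ) : ℝ) := by rw [h20]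
    rw [e2, e0] at hzz
    linarith
  have q0 : lam * 0 + mu = a0 := by rw [hlamdef, hmudef]; ring
  have q2 : lam * 2 + mu = a2 := by rw [hlamdef, hmudef]; ring
  have q3 : lam * 3 + mu = a3 := by rw [hlamdef, hmudef]; linarith
  have q4 : lam * 4 + mu = a4 := by rw [hlamdef, hmudef]; linarith
  have q7 : lam * 7 + mu = a7 := by rw [hlamdef, hmudef]; linarith
  have q11 : lam * 11 + mu = a11 := by rw [hlamdef, hmudef]; linarith
  have q12 : lam * 12 + mu = a12 := by rw [hlamdef, hmudef]; linarith
  have q14 : lam * 14 + mu = a14 := by rw [hlamdef, hmudef]; linarith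
  refine ⟨lam, mu, hlam, ?_⟩
  have himg2 : ({0, 2, 3, 4, 7, 11, 12, 14} : Finset ℝ).image (fun x => lam * x + mu) =
      ({a0, a2, a3, a4, a7, a11, a12, a14} : Finset ℝ) := by
    simp only [Finset.image_insert, Finset.image_singleton]
    rw [q0, q2, q3, q4, q7, q11, q12, q14]
  rw [himg2]
  have uniq : ∀ a ∈ A, ∀ b ∈ A, ((zf a : ℤ) : ℝ) = ((zf b : ℤ) : ℝ) → a = b := by
    intro a ha b hb h
    exact hzinj a ha b hb (by exact_mod_cast h)
  apply Finset.Subset.antisymm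
  · intro x hx
    have hx2 : ((zf x : ℤ) : ℝ) ∈ A.image (fun a => ((zf a : ℤ) : ℝ)) :=
      Finset.mem_image_of_mem _ hx
    rw [hAF] at hx2
    simp only [Finset.mem_image, Finset.mem_insert, Finset.mem_singleton] at hx2
    obtain ⟨s, hs, hsx⟩ := hx2
    simp only [Finset.mem_insert, Finset.mem_singleton]
    rcases hs with rfl | rfl | rfl | rfl | rfl | rfl | rfl | rfl
    · exact Or.inl (uniq x hx a0 ha0 (hsx.symm.trans e0.symm))
    · exact Or.inr (Or.inl (uniq x hx a2 ha2 (hsx.symm.trans e2.symm)))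
    · exact Or.inr (Or.inr (Or.inl (uniq x hx a3 ha3 (hsx.symm.trans e3.symm))))
    · exact Or.inr (Or.inr (Or.inr (Or.inl (uniq x hx a4 ha4 (hsx.symm.trans e4.symm)))))
    · exact Or.inr (Or.inr (Or.inr (Or.inr (Or.inl
        (uniq x hx a7 ha7 (hsx.symm.trans e7.symm))))))
    · exact Or.inr (Or.inr (Or.inr (Or.inr (Or.inr (Or.inl
        (uniq x hx a11 ha11 (hsx.symm.trans e11.symm)))))))
    · exact Or.inr (Or.inr (Or.inr (Or.inr (Or.inr (Or.inr (Or.inl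
        (uniq x hx a12 ha12 (hsx.symm.trans e12.symm))))))))
    · exact Or.inr (Or.inr (Or.inr (Or.inr (Or.inr (Or.inr (Or.inr
        (uniq x hx a14 ha14 (hsx.symm.trans e14.symm))))))))
  · intro x hx
    simp only [Finset.mem_insert, Finset.mem_singleton] at hx
    rcases hx with rfl | rfl | rfl | rfl | rfl | rfl | rfl | rfl
    exacts [ha0, ha2, ha3, ha4, ha7, ha11, ha12, ha14]
end
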